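/- Let 0 < κ < a and set σ = √(1 − (κ/a)²). The following are equivalent: (i) there exists a function φ : ℝ → ℝ, not identically zero, continuously differentiable on ℝ, twice differentiable at every x ∉ {−b, 0}, square-integrable on ℝ, and satisfying −φ''(x) + V(x)φ(x) = −κ²φ(x) for all x ∉ {−b, 0}; (ii) the quantity (ab/π)·σ − (2/π)·arctan(κ/(aσ)) is buna nonnegative integer. That is, −κ² is a bound state of the Schrödinger operator with the block potential V exactly when this transcendental equation holds. -/

import Mathlib

open MeasureTheory

/-- The block (well) potential `V = −a²·χ_{[−b,0]}`, real-valued. -/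
noncomputable def VblockR (a b : ℝ) (x : ℝ) : ℝ :=
  if -b ≤ x ∧ x ≤ 0 then -a ^ 2 else 0

open Set Real Filter

/-- Constancy from vanishing derivative on a convex open set. -/
lemma aux_const {s : Set ℝ} (hs : Convex ℝ s) (ho : IsOpen s) {F : ℝ → ℝ}
    (h : ∀ x ∈ s, HasDerivAt F 0 x) {x y : ℝ} (hx : x ∈ s) (hy : y ∈ s) : F x = F y := by
  apply hs.is_const_of_fderivWithin_eq_zero
    (fun z hz => ((h z hz).differentiableAt).differentiableWithinAt) ?_ hx hy
  intro z hz
  rw [fderivWithin_eq_fderiv (ho.uniqueDiffWithinAt hz) (h z hz).differentiableAt,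
    (h z hz).hasFDerivAt.fderiv]
  ext
  simp

/-- Two continuous functions agreeing on a set agree at a point of its closure. -/
lemma aux_eq_of_eqOn {f g : ℝ → ℝ} {s : Set ℝ} {p : ℝ}
    (hf : ContinuousAt f p) (hg : ContinuousAt g p)
    (hne : (nhdsWithin p s).NeBot) (heq : ∀ x ∈ s, f x = g x) : f p = g p := by
  haveI := hne
  refine tendsto_nhds_unique (f := f) (l := nhdsWithin p s) hf.continuousWithinAt.tendsto ?_
  refine Filter.Tendsto.congr' ?_ hg.continuousWithinAt.tendsto
  filter_upwards [self_mem_nhdsWithin] with y hy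
  exact (heq y hy).symm

/-- Gluing two differentiable functions matching to first order at a point. -/
lemma glue_hasDerivAt (c : ℝ) (f g f' g' : ℝ → ℝ)
    (hf : ∀ x, HasDerivAt f (f' x) x) (hg : ∀ x, HasDerivAt g (g' x) x)
    (h0 : f c = g c) (h1 : f' c = g' c) (x : ℝ) :
    HasDerivAt (fun y => if y ≤ c then f y else g y)
      (if x ≤ c then f' x else g' x) x := by
  rcases lt_trichotomy x c with h | h | h
  · rw [if_pos h.le]
    apply (hf x).congr_of_eventuallyEq
    filter_upwards [Iio_mem_nhds h] with y hy
    rw [if_pos hy.le]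
  · subst h
    rw [if_pos le_rfl]
    have hIic : HasDerivWithinAt (fun y => if y ≤ x then f y else g y) (f' x) (Iic x) x :=
      (hf x).hasDerivWithinAt.congr (fun y hy => if_pos hy) (if_pos le_rfl)
    have hIci : HasDerivWithinAt (fun y => if y ≤ x then f y else g y) (f' x) (Ici x) x := by
      rw [h1]
      refine (hg x).hasDerivWithinAt.congr (fun y hy => ?_) (by rw [if_pos le_rfl, h0])
      rcases eq_or_lt_of_le (Set.mem_Ici.mp hy) with rfl | hlt
      · rw [if_pos le_rfl, h0]
      · rw [if_neg (not_le.2 hlt)]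
    have := hIic.union hIci
    rwa [Iic_union_Ici, hasDerivWithinAt_univ] at this
  · rw [if_neg (not_le.2 h)]
    apply (hg x).congr_of_eventuallyEq
    filter_upwards [Ioi_mem_nhds h] with y hy
    rw [if_neg (not_le.2 hy)]

/-- Structure of square-integrable solutions of `φ'' = κ²φ` on `(0,∞)`. -/
lemma right_region {φ : ℝ → ℝ} {κ : ℝ} (hκ : 0 < κ)
    (hC : ContDiff ℝ 1 φ)
    (hd2 : ∀ x ∈ Set.Ioi (0:ℝ), DifferentiableAt ℝ (deriv φ) x)
    (hode : ∀ x ∈ Set.Ioi (0:ℝ), deriv (deriv φ) x = κ ^ 2 * φ x)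
    (hint : Integrable (fun x => φ x ^ 2)) :
    (∀ x, 0 ≤ x → φ x = φ 0 * Real.exp (-κ * x)) ∧ deriv φ 0 = -κ * φ 0 := by
  have hφd : Differentiable ℝ φ := hC.differentiable one_ne_zero
  have hder : ∀ x, HasDerivAt φ (deriv φ x) x := fun x => (hφd x).hasDerivAt
  set A : ℝ → ℝ := fun x => (deriv φ x + κ * φ x) / (2*κ) * Real.exp (-κ * x) with hA
  set B : ℝ → ℝ := fun x => (κ * φ x - deriv φ x) / (2*κ) * Real.exp (κ * x) with hB
  have hexp : ∀ c x : ℝ, HasDerivAt (fun y => Real.exp (c * y)) (c * Real.exp (c * x)) x := by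
    intro c x
    simpa [mul_comm] using ((hasDerivAt_id x).const_mul c).exp
  have hAder : ∀ x ∈ Set.Ioi (0:ℝ), HasDerivAt A 0 x := by
    intro x hx
    have h1 : HasDerivAt (fun y => (deriv φ y + κ * φ y) / (2*κ))
        ((deriv (deriv φ) x + κ * deriv φ x) / (2*κ)) x :=
      ((hd2 x hx).hasDerivAt.add ((hder x).const_mul κ)).div_const _
    have := h1.mul (hexp (-κ) x)
    refine HasDerivAt.congr_deriv this (Eq.symm ?_)
    rw [hode x hx]
    field_simp
    ring
  have hBder : ∀ x ∈ Set.Ioi (0:ℝ), HasDerivAt B 0 x := by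
    intro x hx
    have h1 : HasDerivAt (fun y => (κ * φ y - deriv φ y) / (2*κ))
        ((κ * deriv φ x - deriv (deriv φ) x) / (2*κ)) x :=
      (((hder x).const_mul κ).sub (hd2 x hx).hasDerivAt).div_const _
    have := h1.mul (hexp κ x)
    refine HasDerivAt.congr_deriv this (Eq.symm ?_)
    rw [hode x hx]
    field_simp
    ring
  have hone : (1:ℝ) ∈ Set.Ioi (0:ℝ) := by norm_num
  have hAc : ∀ x ∈ Set.Ioi (0:ℝ), A x = A 1 :=
    fun x hx => aux_const (convex_Ioi 0) isOpen_Ioi hAder hx hone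
  have hBc : ∀ x ∈ Set.Ioi (0:ℝ), B x = B 1 :=
    fun x hx => aux_const (convex_Ioi 0) isOpen_Ioi hBder hx hone
  have hexpmul : ∀ x : ℝ, Real.exp (-κ*x) * Real.exp (κ*x) = 1 := by
    intro x; rw [← Real.exp_add]; ring_nf; exact Real.exp_zero
  have hκ' : (2:ℝ)*κ ≠ 0 := by positivity
  have hphix : ∀ x ∈ Set.Ioi (0:ℝ),
      φ x = A 1 * Real.exp (κ*x) + B 1 * Real.exp (-κ*x) := by
    intro x hx
    rw [← hAc x hx, ← hBc x hx, hA, hB]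
    have e1 : Real.exp (-κ*x) * Real.exp (κ*x) = 1 := hexpmul x
    have e2 : Real.exp (κ*x) * Real.exp (-κ*x) = 1 := by rw [mul_comm]; exact hexpmul x
    simp only []
    rw [mul_assoc, e1, mul_assoc, e2, mul_one, mul_one]
    field_simp
    ring
  have hderx : ∀ x ∈ Set.Ioi (0:ℝ),
      deriv φ x = κ * A 1 * Real.exp (κ*x) - κ * B 1 * Real.exp (-κ*x) := by
    intro x hx
    rw [← hAc x hx, ← hBc x hx, hA, hB]
    have e1 : Real.exp (-κ*x) * Real.exp (κ*x) = 1 := hexpmul x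
    have e2 : Real.exp (κ*x) * Real.exp (-κ*x) = 1 := by rw [mul_comm]; exact hexpmul x
    have h3 : κ * ((deriv φ x + κ * φ x) / (2 * κ) * Real.exp (-κ * x)) * Real.exp (κ*x)
        - κ * ((κ * φ x - deriv φ x) / (2 * κ) * Real.exp (κ * x)) * Real.exp (-κ*x)
        = κ * ((deriv φ x + κ * φ x) / (2 * κ)) * (Real.exp (-κ * x) * Real.exp (κ*x))
        - κ * ((κ * φ x - deriv φ x) / (2 * κ)) * (Real.exp (κ * x) * Real.exp (-κ*x)) := by
      ring
    simp only []
    rw [h3, e1, e2, mul_one, mul_one]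
    field_simp
    ring
  have hA1 : A 1 = 0 := by
    by_contra hA1
    have h2κ : (0:ℝ) < 2*κ := by positivity
    have hlim : Tendsto (fun x => A 1 + B 1 * Real.exp (-(2*κ*x))) atTop (nhds (A 1)) := by
      have : Tendsto (fun x : ℝ => Real.exp (-(2*κ*x))) atTop (nhds 0) :=
        Real.tendsto_exp_neg_atTop_nhds_zero.comp (tendsto_id.const_mul_atTop h2κ)
      simpa using tendsto_const_nhds.add (this.const_mul (B 1))
    have habs : Tendsto (fun x => |A 1 + B 1 * Real.exp (-(2*κ*x))|) atTop (nhds (|A 1|)) :=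
      hlim.abs
    have hexpT : Tendsto (fun x : ℝ => Real.exp (κ*x)) atTop atTop :=
      Real.tendsto_exp_atTop.comp (tendsto_id.const_mul_atTop hκ)
    have hmul : Tendsto (fun x => Real.exp (κ*x) * |A 1 + B 1 * Real.exp (-(2*κ*x))|)
        atTop atTop := Filter.Tendsto.atTop_mul_pos (abs_pos.2 hA1) hexpT habs
    have hgphi : Tendsto (fun x => |φ x|) atTop atTop := by
      refine hmul.congr' ?_
      filter_upwards [eventually_gt_atTop (0:ℝ)] with x hx
      rw [hphix x hx]
      rw [← abs_of_pos (Real.exp_pos (κ*x)), ← abs_mul]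
      congr 1
      rw [abs_of_pos (Real.exp_pos (κ*x))]
      have e3 : Real.exp (κ*x) * Real.exp (-(2*κ*x)) = Real.exp (-κ*x) := by
        rw [← Real.exp_add]; congr 1; ring
      linear_combination (B 1) * e3
    obtain ⟨M, hM⟩ := eventually_atTop.mp (hgphi.eventually_ge_atTop 1)
    have hsub : Set.Ici M ⊆ {x : ℝ | 1 ≤ φ x ^ 2} := by
      intro x hx
      have h1 := hM x hx
      have := sq_abs (φ x)
      simp only [Set.mem_setOf_eq]
      nlinarith
    have hfin := hint.measure_ge_lt_top one_pos
    have := (measure_mono hsub).trans_lt hfin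
    rw [Real.volume_Ici] at this
    exact (lt_irrefl _ this).elim
  have hphix' : ∀ x ∈ Set.Ioi (0:ℝ), φ x = B 1 * Real.exp (-κ*x) := by
    intro x hx; rw [hphix x hx, hA1]; ring
  have hderx' : ∀ x ∈ Set.Ioi (0:ℝ), deriv φ x = -κ * (B 1 * Real.exp (-κ*x)) := by
    intro x hx; rw [hderx x hx, hA1]; ring
  have hcont : Continuous (fun x : ℝ => B 1 * Real.exp (-κ*x)) :=
    continuous_const.mul (Real.continuous_exp.comp (continuous_const.mul continuous_id))
  have hφ0 : φ 0 = B 1 := by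
    have := aux_eq_of_eqOn (hφd.continuous.continuousAt)
      (hcont.continuousAt) (nhdsGT_neBot 0) hphix'
    simpa using this
  have hd0 : deriv φ 0 = -κ * B 1 := by
    have hcd : Continuous (deriv φ) := hC.continuous_deriv le_rfl
    have := aux_eq_of_eqOn (hcd.continuousAt)
      ((continuous_const.mul hcont).continuousAt) (nhdsGT_neBot 0) hderx'
    simpa using this
  constructor
  · intro x hx
    rcases eq_or_lt_of_le hx with rfl | hx'
    · simp
    · rw [hphix' x hx', hφ0]
  · rw [hd0, hφ0]

/-- Structure of solutions of `φ'' = -k²φ` on a bounded interval. -/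
lemma mid_region {φ : ℝ → ℝ} {k u v : ℝ} (hk : 0 < k) (huv : u < v)
    (hC : ContDiff ℝ 1 φ)
    (hd2 : ∀ x ∈ Set.Ioo u v, DifferentiableAt ℝ (deriv φ) x)
    (hode : ∀ x ∈ Set.Ioo u v, deriv (deriv φ) x = -k ^ 2 * φ x) :
    ∃ c d : ℝ,
      (∀ x ∈ Set.Icc u v, φ x = c * Real.cos (k*x) + d * Real.sin (k*x)) ∧
      (∀ x ∈ Set.Icc u v, deriv φ x = -(c*k) * Real.sin (k*x) + d*k * Real.cos (k*x)) := by
  have hφd : Differentiable ℝ φ := hC.differentiable one_ne_zero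
  have hder : ∀ x, HasDerivAt φ (deriv φ x) x := fun x => (hφd x).hasDerivAt
  have hcos : ∀ x : ℝ, HasDerivAt (fun y => Real.cos (k*y)) (-(k * Real.sin (k*x))) x := by
    intro x
    have := (Real.hasDerivAt_cos (k*x)).comp x ((hasDerivAt_id x).const_mul k)
    simpa [mul_comm, Function.comp_def] using this
  have hsin : ∀ x : ℝ, HasDerivAt (fun y => Real.sin (k*y)) (k * Real.cos (k*x)) x := by
    intro x
    have := (Real.hasDerivAt_sin (k*x)).comp x ((hasDerivAt_id x).const_mul k)
    simpa [mul_comm, Function.comp_def] using this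
  set C : ℝ → ℝ := fun x => φ x * Real.cos (k*x) - (deriv φ x / k) * Real.sin (k*x) with hCdef
  set D : ℝ → ℝ := fun x => φ x * Real.sin (k*x) + (deriv φ x / k) * Real.cos (k*x) with hDdef
  have hCder : ∀ x ∈ Set.Ioo u v, HasDerivAt C 0 x := by
    intro x hx
    have h1 := ((hder x).mul (hcos x)).sub
      (((hd2 x hx).hasDerivAt.div_const k).mul (hsin x))
    refine HasDerivAt.congr_deriv h1 (Eq.symm ?_)
    rw [hode x hx]
    field_simp
    ring
  have hDder : ∀ x ∈ Set.Ioo u v, HasDerivAt D 0 x := by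
    intro x hx
    have h1 := ((hder x).mul (hsin x)).add
      (((hd2 x hx).hasDerivAt.div_const k).mul (hcos x))
    refine HasDerivAt.congr_deriv h1 (Eq.symm ?_)
    rw [hode x hx]
    field_simp
    ring
  have hmid : (u+v)/2 ∈ Set.Ioo u v := by constructor <;> linarith
  refine ⟨C ((u+v)/2), D ((u+v)/2), ?_, ?_⟩
  · have hoo : ∀ x ∈ Set.Ioo u v,
        φ x = C ((u+v)/2) * Real.cos (k*x) + D ((u+v)/2) * Real.sin (k*x) := by
      intro x hx
      rw [← aux_const (convex_Ioo u v) isOpen_Ioo hCder hx hmid,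
        ← aux_const (convex_Ioo u v) isOpen_Ioo hDder hx hmid, hCdef, hDdef]
      simp only []
      have := Real.sin_sq_add_cos_sq (k*x)
      linear_combination (-(φ x)) * this
    intro x hx
    have hcont2 : Continuous fun x =>
        C ((u+v)/2) * Real.cos (k*x) + D ((u+v)/2) * Real.sin (k*x) := by
      fun_prop
    rcases eq_or_lt_of_le hx.1 with rfl | hu
    · exact aux_eq_of_eqOn hφd.continuous.continuousAt hcont2.continuousAt
        (by rw [mem_closure_iff_nhdsWithin_neBot.symm, closure_Ioo huv.ne]; exact ⟨hx.1, hx.2⟩) hoo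
    rcases eq_or_lt_of_le hx.2 with rfl | hv
    · exact aux_eq_of_eqOn hφd.continuous.continuousAt hcont2.continuousAt
        (by rw [mem_closure_iff_nhdsWithin_neBot.symm, closure_Ioo huv.ne]; exact ⟨hx.1, hx.2⟩) hoo
    · exact hoo x ⟨hu, hv⟩
  · have hoo : ∀ x ∈ Set.Ioo u v,
        deriv φ x = -(C ((u+v)/2)*k) * Real.sin (k*x) + D ((u+v)/2)*k * Real.cos (k*x) := by
      intro x hx
      rw [← aux_const (convex_Ioo u v) isOpen_Ioo hCder hx hmid,
        ← aux_const (convex_Ioo u v) isOpen_Ioo hDder hx hmid, hCdef, hDdef]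
      simp only []
      have := Real.sin_sq_add_cos_sq (k*x)
      have hk' : k ≠ 0 := ne_of_gt hk
      field_simp
      linear_combination (-(deriv φ x)) * this
    intro x hx
    have hcd : Continuous (deriv φ) := hC.continuous_deriv le_rfl
    have hcont2 : Continuous fun x =>
        -(C ((u+v)/2)*k) * Real.sin (k*x) + D ((u+v)/2)*k * Real.cos (k*x) := by fun_prop
    rcases eq_or_lt_of_le hx.1 with rfl | hu
    · exact aux_eq_of_eqOn hcd.continuousAt hcont2.continuousAt
        (by rw [mem_closure_iff_nhdsWithin_neBot.symm, closure_Ioo huv.ne]; exact ⟨hx.1, hx.2⟩) hoo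
    rcases eq_or_lt_of_le hx.2 with rfl | hv
    · exact aux_eq_of_eqOn hcd.continuousAt hcont2.continuousAt
        (by rw [mem_closure_iff_nhdsWithin_neBot.symm, closure_Ioo huv.ne]; exact ⟨hx.1, hx.2⟩) hoo
    · exact hoo x ⟨hu, hv⟩

/-- Integrability of a growing exponential on a left half-line. -/
lemma exp_integrableOn_Iic {c : ℝ} (d : ℝ) (hc : 0 < c) :
    IntegrableOn (fun x => Real.exp (c*x)) (Set.Iic d) := by
  rw [← (Measure.measurePreserving_neg (volume : Measure ℝ)).integrableOn_comp_preimage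
      (Homeomorph.neg ℝ).measurableEmbedding]
  simp only [Function.comp_def, neg_preimage, neg_Iic]
  rw [integrableOn_Ici_iff_integrableOn_Ioi]
  refine (exp_neg_integrableOn_Ioi (-d) hc).congr_fun (fun x _ => ?_) measurableSet_Ioi
  simp [mul_comm]

/-- The key trigonometric identity relating the matching condition to `sin (k b - 2δ)`. -/
lemma sin_shift {k κ b : ℝ} (hk : 0 < k) (hκ : 0 < κ) :
    (k^2+κ^2) * Real.sin (k*b - 2*Real.arctan (κ/k)) =
      (k^2-κ^2) * Real.sin (k*b) - 2*κ*k*Real.cos (k*b) := by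
  set δ := Real.arctan (κ/k) with hδ
  have hk' : k ≠ 0 := ne_of_gt hk
  have hsq : (0:ℝ) < 1 + (κ/k)^2 := by positivity
  have h1 : k * Real.sin δ = κ * Real.cos δ := by
    rw [hδ, Real.sin_arctan, Real.cos_arctan]
    field_simp
  have h2 : Real.sin δ ^ 2 + Real.cos δ ^ 2 = 1 := Real.sin_sq_add_cos_sq δ
  have h3 : Real.cos δ ^ 2 * (k^2 + κ^2) = k^2 := by
    linear_combination (-(k*Real.sin δ + κ*Real.cos δ)) * h1 + k^2 * h2
  have h4 : Real.sin δ * Real.cos δ * (k^2 + κ^2) = κ * k := by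
    have h4' : k * (Real.sin δ * Real.cos δ * (k^2 + κ^2)) = k * (κ * k) := by
      linear_combination (Real.cos δ * (k^2+κ^2)) * h1 + κ * h3
    exact mul_left_cancel₀ hk' h4'
  rw [Real.sin_sub, Real.cos_two_mul, Real.sin_two_mul]
  linear_combination (2*Real.sin (k*b)) * h3 - (2*Real.cos (k*b)) * h4

/-- `−κ²` is a bound state of the Schrödinger operator with the block potential
exactly when `(ab/π)σ − (2/π)·arctan(κ/(aσ))` is a nonnegative integer, where
`σ = √(1 − (κ/a)²)`. -/
theorem block_bound_state_iff (a b : ℝ) (ha : 0 < a) (hb : 0 < b)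
    (κ : ℝ) (hκ0 : 0 < κ) (hκa : κ < a)
    (σ : ℝ) (hσ : σ = Real.sqrt (1 - (κ / a) ^ 2)) :
    (∃ φ : ℝ → ℝ, φ ≠ 0 ∧ ContDiff ℝ 1 φ ∧
        (∀ x : ℝ, x ∉ ({-b, 0} : Set ℝ) → DifferentiableAt ℝ (deriv φ) x) ∧
        Integrable (fun x : ℝ => (φ x) ^ 2) ∧
        (∀ x : ℝ, x ∉ ({-b, 0} : Set ℝ) →
          -(deriv (deriv φ) x) + VblockR a b x * φ x = -κ ^ 2 * φ x)) ↔
      (∃ m : ℕ, a * b / Real.pi * σ - 2 / Real.pi * Real.arctan (κ / (a * σ)) = (m : ℝ)) := by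
  have hk2' : 0 < a^2 - κ^2 := by nlinarith
  set k := Real.sqrt (a^2 - κ^2) with hkdef
  have hk : 0 < k := Real.sqrt_pos.mpr hk2'
  have hk2 : k^2 = a^2 - κ^2 := Real.sq_sqrt hk2'.le
  have hak : a * σ = k := by
    rw [hσ, hkdef, ← Real.sqrt_sq ha.le, ← Real.sqrt_mul (sq_nonneg a)]
    congr 1
    field_simp
    rw [Real.sq_sqrt (sq_nonneg a)]
  set δ := Real.arctan (κ/k) with hδdef
  have hδpos : 0 < δ := by
    rw [hδdef, ← Real.arctan_zero]
    exact Real.arctan_strictMono (by positivity)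
  have hδlt : δ < π/2 := Real.arctan_lt_pi_div_two _
  have hsincos : k * Real.sin δ = κ * Real.cos δ := by
    rw [hδdef, Real.sin_arctan, Real.cos_arctan]
    field_simp
  have hcosδ : 0 < Real.cos δ := Real.cos_arctan_pos _
  have hRHS : (∃ m : ℕ, a * b / Real.pi * σ - 2 / Real.pi * Real.arctan (κ / (a * σ)) = (m : ℝ))
      ↔ (∃ m : ℕ, k*b - 2*δ = m*π) := by
    apply exists_congr
    intro m
    rw [hak, ← hδdef]
    constructor
    · intro h
      have hπ : (π:ℝ) ≠ 0 := Real.pi_ne_zero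
      have hab : a * b * σ = k * b := by rw [← hak]; ring
      field_simp at h
      nlinarith [h, hab]
    · intro h
      have hπ : (π:ℝ) ≠ 0 := Real.pi_ne_zero
      have hab : a * b * σ = k * b := by rw [← hak]; ring
      field_simp
      nlinarith [h, hab]
  rw [hRHS]
  constructor
  · rintro ⟨φ, hne, hC, hd2, hint, hode⟩
    have hφd : Differentiable ℝ φ := hC.differentiable one_ne_zero
    have hmemR : ∀ x : ℝ, 0 < x → x ∉ ({-b, 0} : Set ℝ) := by
      intro x hx
      simp only [Set.mem_insert_iff, Set.mem_singleton_iff, not_or]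
      constructor <;> intro h <;> subst h <;> linarith
    have hmemL : ∀ x : ℝ, x < -b → x ∉ ({-b, 0} : Set ℝ) := by
      intro x hx
      simp only [Set.mem_insert_iff, Set.mem_singleton_iff, not_or]
      constructor <;> intro h <;> subst h <;> linarith
    have hmemM : ∀ x : ℝ, x ∈ Set.Ioo (-b) 0 → x ∉ ({-b, 0} : Set ℝ) := by
      intro x hx
      simp only [Set.mem_insert_iff, Set.mem_singleton_iff, not_or]
      constructor <;> intro h <;> subst h
      · exact lt_irrefl _ hx.1
      · exact lt_irrefl _ hx.2
    -- right region
    have hodeR : ∀ x ∈ Set.Ioi (0:ℝ), deriv (deriv φ) x = κ ^ 2 * φ x := by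
      intro x hx
      have h := hode x (hmemR x hx)
      have hV : VblockR a b x = 0 := by
        rw [VblockR, if_neg]
        rintro ⟨-, h2⟩
        exact absurd hx (by simpa using not_lt.2 h2)
      rw [hV] at h
      linarith
    obtain ⟨hRval, hRder⟩ := right_region hκ0 hC
      (fun x hx => hd2 x (hmemR x hx)) hodeR hint
    -- left region via reflection
    set ψ : ℝ → ℝ := fun x => φ (-b - x) with hψdef
    have hgd : ∀ x : ℝ, HasDerivAt (fun y : ℝ => -b - y) (-1) x := by
      intro x
      simpa using (hasDerivAt_id x).const_sub (-b)
    have hψC : ContDiff ℝ 1 ψ := hC.comp (contDiff_const.sub contDiff_id)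
    have hψder : ∀ x, HasDerivAt ψ (-(deriv φ (-b - x))) x := by
      intro x
      have := ((hφd (-b - x)).hasDerivAt).comp x (hgd x)
      simpa [mul_comm, Function.comp_def] using this
    have hψderiv : deriv ψ = fun x => -(deriv φ (-b - x)) := funext fun x => (hψder x).deriv
    have hmemL' : ∀ x : ℝ, 0 < x → (-b - x) ∉ ({-b, 0} : Set ℝ) :=
      fun x hx => hmemL _ (by linarith)
    have hd2L : ∀ x ∈ Set.Ioi (0:ℝ), DifferentiableAt ℝ (deriv ψ) x := by
      intro x hx
      rw [hψderiv]
      exact ((hd2 _ (hmemL' x hx)).comp x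
        (((differentiable_const (-b)).sub differentiable_id) x)).neg
    have hodeL : ∀ x ∈ Set.Ioi (0:ℝ), deriv (deriv ψ) x = κ ^ 2 * ψ x := by
      intro x hx
      rw [hψderiv]
      have h1 : HasDerivAt (fun y => deriv φ (-b - y)) (deriv (deriv φ) (-b - x) * (-1)) x :=
        ((hd2 _ (hmemL' x hx)).hasDerivAt).comp x (hgd x)
      have h2 : deriv (fun y => -(deriv φ (-b - y))) x = deriv (deriv φ) (-b - x) := by
        rw [deriv.fun_neg, h1.deriv]; ring
      rw [h2]
      have h := hode _ (hmemL' x hx)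
      have hV : VblockR a b (-b - x) = 0 := by
        rw [VblockR, if_neg]
        rintro ⟨h2', -⟩
        have hx' : (0:ℝ) < x := hx
        linarith
      rw [hV] at h
      simp only [hψdef]
      linarith
    have hintL : Integrable (fun x => ψ x ^ 2) := by
      have := (hint.comp_sub_left (-b) : Integrable fun t => φ (-b - t) ^ 2)
      exact this
    obtain ⟨hLval, hLder⟩ := right_region hκ0 hψC hd2L hodeL hintL
    have hψ0 : ψ 0 = φ (-b) := by simp [hψdef]
    have hLder' : deriv φ (-b) = κ * φ (-b) := by
      rw [hψderiv] at hLder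
      simp only at hLder
      rw [hψ0] at hLder
      have : -(deriv φ (-b - 0)) = -κ * φ (-b) := hLder
      simp only [sub_zero] at this
      linarith
    -- middle region
    have hodeM : ∀ x ∈ Set.Ioo (-b) (0:ℝ), deriv (deriv φ) x = -k ^ 2 * φ x := by
      intro x hx
      have h := hode x (hmemM x hx)
      have hV : VblockR a b x = -a^2 := by
        rw [VblockR, if_pos ⟨hx.1.le, hx.2.le⟩]
      rw [hV] at h
      have : deriv (deriv φ) x = (κ^2 - a^2) * φ x := by linarith
      rw [this, hk2]
      ring
    obtain ⟨c, d, hMval, hMder⟩ := mid_region hk (neg_lt_zero.mpr hb) hC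
      (fun x hx => hd2 x (hmemM x hx)) hodeM
    have hbmem : (-b : ℝ) ∈ Set.Icc (-b) (0:ℝ) := ⟨le_rfl, by linarith⟩
    have h0mem : (0 : ℝ) ∈ Set.Icc (-b) (0:ℝ) := ⟨by linarith, le_rfl⟩
    have e1 : φ 0 = c := by simpa using hMval 0 h0mem
    have e2 : deriv φ 0 = d * k := by
      have := hMder 0 h0mem
      simpa using this
    have hneg : k * (-b) = -(k*b) := by ring
    have e3 : φ (-b) = c * Real.cos (k*b) - d * Real.sin (k*b) := by
      have := hMval (-b) hbmem
      rwa [hneg, Real.cos_neg, Real.sin_neg, mul_neg, ← sub_eq_add_neg] at this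
    have e4 : deriv φ (-b) = c*k * Real.sin (k*b) + d*k * Real.cos (k*b) := by
      have := hMder (-b) hbmem
      rw [hneg, Real.cos_neg, Real.sin_neg] at this
      rw [this]
      ring
    have hm1 : d * k = -(κ * c) := by
      rw [← e2, hRder, e1]
      ring
    -- nontriviality: c ≠ 0
    have hcne : c ≠ 0 := by
      intro hc
      have hd0 : d = 0 := by
        have h0 : d * k = 0 := by rw [hm1, hc]; ring
        have hk' : k ≠ 0 := ne_of_gt hk
        exact (mul_eq_zero.mp h0).resolve_right hk'
      apply hne
      funext x
      show φ x = 0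
      have hφmb : φ (-b) = 0 := by rw [e3, hc, hd0]; ring
      have hφ0 : φ 0 = 0 := by rw [e1, hc]
      rcases le_or_gt x (-b) with h | h
      · -- use left formula: φ x = ψ (-b - x) with -b - x ≥ 0
        have h0 : 0 ≤ -b - x := by linarith
        have := hLval (-b - x) h0
        have hx' : ψ (-b - x) = φ x := by simp [hψdef]
        rw [hx', hψ0, hφmb] at this
        rw [this]; ring
      rcases le_or_gt x 0 with h2 | h2
      · rw [hMval x ⟨h.le, h2⟩, hc, hd0]; ring
      · rw [hRval x h2.le, hφ0]; ring
    -- the matching equation at -b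
    have heq : c*k * Real.sin (k*b) + d*k * Real.cos (k*b)
        = κ * (c * Real.cos (k*b) - d * Real.sin (k*b)) := by
      rw [← e4, ← e3, hLder']
    have hfac : c * ((k^2-κ^2) * Real.sin (k*b) - 2*κ*k*Real.cos (k*b)) = 0 := by
      linear_combination k * heq - (κ*Real.sin (k*b) + k*Real.cos (k*b)) * hm1
    have hrel : (k^2-κ^2) * Real.sin (k*b) - 2*κ*k*Real.cos (k*b) = 0 := by
      rcases mul_eq_zero.mp hfac with h | h
      · exact absurd h hcne
      · exact h
    have hsin0 : Real.sin (k*b - 2*δ) = 0 := by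
      have hid := sin_shift (κ := κ) (b := b) hk hκ0
      rw [← hδdef] at hid
      have hpos : (0:ℝ) < k^2 + κ^2 := by positivity
      have : (k^2+κ^2) * Real.sin (k*b - 2*δ) = 0 := by rw [hid, hrel]
      exact (mul_eq_zero.mp this).resolve_left (ne_of_gt hpos)
    obtain ⟨n, hn⟩ := Real.sin_eq_zero_iff.mp hsin0
    have hkb : 0 < k * b := mul_pos hk hb
    have hgt : -π < k*b - 2*δ := by linarith
    have hn0 : 0 ≤ n := by
      by_contra hneg
      push_neg at hneg
      have h1 : (n:ℝ) ≤ -1 := by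
        have : n ≤ -1 := by omega
        exact_mod_cast this
      have h2 := mul_le_mul_of_nonneg_right h1 Real.pi_pos.le
      rw [hn] at h2
      linarith
    refine ⟨n.toNat, ?_⟩
    rw [← hn]
    congr 1
    exact_mod_cast (Int.toNat_of_nonneg hn0).symm
  · rintro ⟨m, hm⟩
    have hkbm : k*b = m*π + 2*δ := by linarith
    set A : ℝ := (-1:ℝ)^m * Real.cos δ with hAdef
    set L : ℝ → ℝ := fun x => A * Real.exp (κ*(x+b)) with hLdef
    set L' : ℝ → ℝ := fun x => A * κ * Real.exp (κ*(x+b)) with hL'def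
    set M : ℝ → ℝ := fun x => Real.cos (k*x + δ) with hMdef
    set M' : ℝ → ℝ := fun x => -k * Real.sin (k*x + δ) with hM'def
    set R : ℝ → ℝ := fun x => Real.cos δ * Real.exp (-κ*x) with hRdef
    set R' : ℝ → ℝ := fun x => Real.cos δ * -κ * Real.exp (-κ*x) with hR'def
    have hargL : ∀ x : ℝ, HasDerivAt (fun y : ℝ => κ*(y+b)) κ x := by
      intro x
      simpa using ((hasDerivAt_id x).add_const b).const_mul κ
    have hargM : ∀ x : ℝ, HasDerivAt (fun y : ℝ => k*y + δ) k x := by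
      intro x
      simpa using ((hasDerivAt_id x).const_mul k).add_const δ
    have hargR : ∀ x : ℝ, HasDerivAt (fun y : ℝ => -κ*y) (-κ) x := by
      intro x
      simpa using (hasDerivAt_id x).const_mul (-κ)
    have hLd : ∀ x, HasDerivAt L (L' x) x := by
      intro x
      have := (hargL x).exp.const_mul A
      refine HasDerivAt.congr_deriv this (Eq.symm ?_)
      simp only [hL'def]
      ring
    have hMd : ∀ x, HasDerivAt M (M' x) x := by
      intro x
      have := (hargM x).cos
      refine HasDerivAt.congr_deriv this (Eq.symm ?_)
      simp only [hM'def]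
      ring
    have hRd : ∀ x, HasDerivAt R (R' x) x := by
      intro x
      have := (hargR x).exp.const_mul (Real.cos δ)
      refine HasDerivAt.congr_deriv this (Eq.symm ?_)
      simp only [hR'def]
      ring
    have hL'd : ∀ x, HasDerivAt L' (κ^2 * L x) x := by
      intro x
      have := (hargL x).exp.const_mul (A*κ)
      refine HasDerivAt.congr_deriv this (Eq.symm ?_)
      simp only [hLdef]
      ring
    have hM'd : ∀ x, HasDerivAt M' (-k^2 * M x) x := by
      intro x
      have := (hargM x).sin.const_mul (-k)
      refine HasDerivAt.congr_deriv this (Eq.symm ?_)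
      simp only [hMdef]
      ring
    have hR'd : ∀ x, HasDerivAt R' (κ^2 * R x) x := by
      intro x
      have := (hargR x).exp.const_mul (Real.cos δ * -κ)
      refine HasDerivAt.congr_deriv this (Eq.symm ?_)
      simp only [hRdef]
      ring
    have hearg : k*(-b)+δ = -((m:ℝ)*π - (-δ)) := by linear_combination -hm
    have hexp0 : κ*(-b+b) = 0 := by ring
    have hj1 : L (-b) = M (-b) := by
      simp only [hLdef, hMdef]
      rw [hearg, Real.cos_neg, Real.cos_nat_mul_pi_sub, Real.cos_neg, hexp0,
        Real.exp_zero, hAdef]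
      ring
    have hj1' : L' (-b) = M' (-b) := by
      simp only [hL'def, hM'def]
      rw [hearg, Real.sin_neg, Real.sin_nat_mul_pi_sub, Real.sin_neg, hexp0,
        Real.exp_zero, hAdef]
      ring_nf
      linear_combination (-(-1:ℝ)^m) * hsincos
    have hj2 : M 0 = R 0 := by
      simp only [hMdef, hRdef]
      norm_num
    have hj2' : M' 0 = R' 0 := by
      simp only [hM'def, hR'def]
      norm_num
      linear_combination hsincos
    set g1 : ℝ → ℝ := fun x => if x ≤ -b then L x else M x with hg1def
    set d1 : ℝ → ℝ := fun x => if x ≤ -b then L' x else M' x with hd1def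
    have hg1d : ∀ x, HasDerivAt g1 (d1 x) x := glue_hasDerivAt (-b) L M L' M' hLd hMd hj1 hj1'
    set φ : ℝ → ℝ := fun x => if x ≤ 0 then g1 x else R x with hφdef
    set dφ : ℝ → ℝ := fun x => if x ≤ 0 then d1 x else R' x with hdφdef
    have hnb0 : ¬((0:ℝ) ≤ -b) := by push_neg; linarith
    have hg10 : g1 0 = R 0 := by simp only [hg1def]; rw [if_neg hnb0]; exact hj2
    have hd10 : d1 0 = R' 0 := by simp only [hd1def]; rw [if_neg hnb0]; exact hj2'
    have hφd : ∀ x, HasDerivAt φ (dφ x) x := glue_hasDerivAt 0 g1 R d1 R' hg1d hRd hg10 hd10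
    have hderφ : deriv φ = dφ := funext fun x => (hφd x).deriv
    have hL'c : Continuous L' := by fun_prop
    have hM'c : Continuous M' := by fun_prop
    have hR'c : Continuous R' := by fun_prop
    have hd1c : Continuous d1 := by
      simp only [hd1def]
      exact Continuous.if_le hL'c hM'c continuous_id continuous_const
        (fun x hx => by rw [hx]; exact hj1')
    have hdφc : Continuous dφ := by
      simp only [hdφdef]
      refine Continuous.if_le hd1c hR'c continuous_id continuous_const
        (fun x hx => by rw [hx]; exact hd10)
    have hφC : ContDiff ℝ 1 φ := by
      rw [contDiff_one_iff_deriv]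
      exact ⟨fun x => (hφd x).differentiableAt, by rw [hderφ]; exact hdφc⟩
    have hstruct : ∀ x : ℝ, x ∉ ({-b, 0} : Set ℝ) →
        DifferentiableAt ℝ (deriv φ) x ∧
        (-(deriv (deriv φ) x) + VblockR a b x * φ x = -κ^2 * φ x) := by
      intro x hx
      simp only [Set.mem_insert_iff, Set.mem_singleton_iff, not_or] at hx
      obtain ⟨hx1, hx2⟩ := hx
      rcases lt_or_gt_of_ne hx1 with h1 | h1
      · have hev : deriv φ =ᶠ[nhds x] L' := by
          filter_upwards [Iio_mem_nhds h1] with y hy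
          rw [hderφ]
          simp only [hdφdef, hd1def]
          rw [if_pos (by linarith [Set.mem_Iio.mp hy] : y ≤ (0:ℝ)),
            if_pos (le_of_lt (Set.mem_Iio.mp hy))]
        have hφx : φ x = L x := by
          simp only [hφdef, hg1def]
          rw [if_pos (by linarith : x ≤ (0:ℝ)), if_pos h1.le]
        constructor
        · rw [hev.differentiableAt_iff]
          exact (hL'd x).differentiableAt
        · have hdd : deriv (deriv φ) x = κ^2 * L x := by
            rw [hev.deriv_eq, (hL'd x).deriv]
          have hV : VblockR a b x = 0 := by
            rw [VblockR, if_neg]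
            rintro ⟨hc1, -⟩
            linarith
          rw [hdd, hφx, hV]
          ring
      · rcases lt_or_gt_of_ne hx2 with h2 | h2
        · have hev : deriv φ =ᶠ[nhds x] M' := by
            filter_upwards [Ioo_mem_nhds h1 h2] with y hy
            rw [hderφ]
            simp only [hdφdef, hd1def]
            rw [if_pos hy.2.le, if_neg (not_le.2 hy.1)]
          have hφx : φ x = M x := by
            simp only [hφdef, hg1def]
            rw [if_pos h2.le, if_neg (not_le.2 h1)]
          constructor
          · rw [hev.differentiableAt_iff]
            exact (hM'd x).differentiableAt
          · have hdd : deriv (deriv φ) x = -k^2 * M x := by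
              rw [hev.deriv_eq, (hM'd x).deriv]
            have hV : VblockR a b x = -a^2 := by
              rw [VblockR, if_pos ⟨h1.le, h2.le⟩]
            rw [hdd, hφx, hV]
            linear_combination (M x) * hk2
        · have hev : deriv φ =ᶠ[nhds x] R' := by
            filter_upwards [Ioi_mem_nhds h2] with y hy
            rw [hderφ]
            simp only [hdφdef]
            rw [if_neg (not_le.2 (Set.mem_Ioi.mp hy))]
          have hφx : φ x = R x := by
            simp only [hφdef]
            rw [if_neg (not_le.2 h2)]
          constructor
          · rw [hev.differentiableAt_iff]
            exact (hR'd x).differentiableAt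
          · have hdd : deriv (deriv φ) x = κ^2 * R x := by
              rw [hev.deriv_eq, (hR'd x).deriv]
            have hV : VblockR a b x = 0 := by
              rw [VblockR, if_neg]
              rintro ⟨-, hc2⟩
              linarith
            rw [hdd, hφx, hV]
            ring
    have hint : Integrable (fun x : ℝ => φ x ^ 2) := by
      rw [← integrableOn_univ]
      have hsplit : (Set.univ : Set ℝ) = Set.Iic (-b) ∪ (Set.Icc (-b) 0 ∪ Set.Ioi 0) := by
        ext x
        simp only [Set.mem_univ, true_iff, Set.mem_union, Set.mem_Iic, Set.mem_Icc, Set.mem_Ioi]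
        by_cases h : x ≤ -b
        · exact Or.inl h
        · by_cases h2 : x ≤ 0
          · exact Or.inr (Or.inl ⟨by linarith [not_le.1 h], h2⟩)
          · exact Or.inr (Or.inr (not_le.1 h2))
      rw [hsplit]
      apply IntegrableOn.union
      · have h1 : IntegrableOn (fun x : ℝ => (A^2 * Real.exp (2*(κ*b))) * Real.exp ((2*κ)*x))
            (Set.Iic (-b)) := (exp_integrableOn_Iic (-b) (by positivity)).const_mul _
        refine h1.congr_fun (fun x hx => ?_) measurableSet_Iic
        have hxb : x ≤ -b := hx
        have hφx : φ x = L x := by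
          simp only [hφdef, hg1def]
          rw [if_pos (by linarith : x ≤ (0:ℝ)), if_pos hxb]
        rw [hφx]
        simp only [hLdef]
        have hAe : (A * Real.exp (κ*(x+b)))^2
            = A^2 * (Real.exp (κ*(x+b)) * Real.exp (κ*(x+b))) := by ring
        rw [hAe, ← Real.exp_add]
        have harg : κ*(x+b) + κ*(x+b) = 2*(κ*b) + 2*κ*x := by ring
        rw [harg, Real.exp_add, hAdef]
        ring
      apply IntegrableOn.union
      · exact (hφC.continuous.pow 2).integrableOn_Icc
      · have h1 : IntegrableOn (fun x : ℝ => (Real.cos δ)^2 * Real.exp (-(2*κ)*x))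
            (Set.Ioi 0) := (exp_neg_integrableOn_Ioi 0 (by positivity)).const_mul _
        refine h1.congr_fun (fun x hx => ?_) measurableSet_Ioi
        have hφx : φ x = R x := by
          simp only [hφdef]
          rw [if_neg (not_le.2 (Set.mem_Ioi.mp hx))]
        rw [hφx]
        simp only [hRdef]
        have hRe : (Real.cos δ * Real.exp (-κ*x))^2
            = (Real.cos δ)^2 * (Real.exp (-κ*x) * Real.exp (-κ*x)) := by ring
        rw [hRe, ← Real.exp_add]
        congr 2
        ring
    have hφ0 : φ 0 = Real.cos δ := by
      simp only [hφdef, hg1def, hMdef]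
      rw [if_pos le_rfl, if_neg hnb0]
      norm_num
    refine ⟨φ, ?_, hφC, fun x hx => (hstruct x hx).1, hint, fun x hx => (hstruct x hx).2⟩
    intro h0
    have := congrFun h0 0
    rw [hφ0] at this
    exact absurd this (ne_of_gt hcosδ)
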